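/- Two distinct infinite words x = i₁i₂… and y = j₁j₂… in {1,2,3}^ℕ have the same image under the standard projection π onto the Sierpiński gasket if and only if there exist m ≥ 0 and distinct letters k, l ∈ {1,2,3} such that i_s = j_s for all s ≤ m, and the tail of x after position m equals l followed by k repeated infinitely, while the tail of y after position m equals k followed by l repeated infinitely. -/

import Mathlib

noncomputable def sierpVertex : Fin 3 → ℝ × ℝ
  | 0 => (1/2, Real.sqrt 3 / 2)
  | 1 => (0, 0)
  | 2 => (1, 0)

noncomputable def sierpMap (i : Fin 3) (x : ℝ × ℝ) : ℝ × ℝ :=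
  ((x.1 + (sierpVertex i).1) / 2, (x.2 + (sierpVertex i).2) / 2)

/-- `S_{x 0} ∘ S_{x 1} ∘ ⋯ ∘ S_{x (n-1)}` applied to `x₀`. -/
noncomputable def sierpApprox (x : ℕ → Fin 3) (n : ℕ) (x₀ : ℝ × ℝ) : ℝ × ℝ :=
  (List.range n).foldr (fun k acc => sierpMap (x k) acc) x₀

/-! ### Auxiliary machinery -/

noncomputable def sierpW (c : Fin 3 → ℝ) (x : ℕ → Fin 3) : ℝ :=
  ∑' k : ℕ, c (x k) / 2 ^ (k + 1)

def sierpInd (i : Fin 3) : Fin 3 → ℝ := fun j => if j = i then 1 else 0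

lemma sierpInd_nonneg (i j : Fin 3) : 0 ≤ sierpInd i j := by
  unfold sierpInd; split <;> norm_num

lemma sierpInd_le_one (i j : Fin 3) : sierpInd i j ≤ 1 := by
  unfold sierpInd; split <;> norm_num

lemma sqrt3_le_two : Real.sqrt 3 ≤ 2 := by
  nlinarith [Real.sq_sqrt (by norm_num : (3:ℝ) ≥ 0), Real.sqrt_nonneg 3]

lemma sierpVertex_mem (i : Fin 3) :
    (sierpVertex i).1 ∈ Set.Icc (0:ℝ) 1 ∧ (sierpVertex i).2 ∈ Set.Icc (0:ℝ) 1 := by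
  have h1 := sqrt3_le_two
  have h2 := Real.sqrt_nonneg 3
  fin_cases i <;> constructor <;> constructor <;> simp [sierpVertex] <;> linarith

lemma summable_sierp {c : Fin 3 → ℝ} (hc0 : ∀ i, 0 ≤ c i) (hc1 : ∀ i, c i ≤ 1)
    (x : ℕ → Fin 3) : Summable (fun k : ℕ => c (x k) / 2 ^ (k + 1)) := by
  apply Summable.of_nonneg_of_le (fun k => div_nonneg (hc0 _) (by positivity))
    (fun k => ?_) summable_geometric_two
  have h1 : c (x k) / 2 ^ (k + 1) ≤ 1 / 2 ^ (k + 1) :=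
    div_le_div_of_nonneg_right (hc1 _) (by positivity) |>.trans_eq (by norm_num)
  calc c (x k) / 2 ^ (k + 1) ≤ 1 / 2 ^ (k + 1) := h1
    _ ≤ (1/2 : ℝ) ^ k := by
        rw [one_div, one_div_pow, one_div]
        apply inv_anti₀ (by positivity)
        exact pow_le_pow_right₀ (by norm_num) (by omega)

lemma tsum_tail (m : ℕ) : ∑' s : ℕ, (1:ℝ) / 2 ^ (s + m + 2) = 1 / 2 ^ (m + 1) := by
  have h : ∀ s : ℕ, (1:ℝ) / 2 ^ (s + m + 2) = (1/2 : ℝ) ^ s * (1 / 2 ^ (m + 2)) := by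
    intro s
    rw [one_div_pow]
    rw [show s + m + 2 = s + (m + 2) by omega, pow_add]
    field_simp
  rw [tsum_congr h, tsum_mul_right, tsum_geometric_two]
  rw [pow_succ]
  field_simp

/-- Explicit formula for the approximations. -/
lemma sierpApprox_formula (x : ℕ → Fin 3) (x₀ : ℝ × ℝ) (n : ℕ) :
    sierpApprox x n x₀ =
      (x₀.1 / 2 ^ n + ∑ k ∈ Finset.range n, (sierpVertex (x k)).1 / 2 ^ (k + 1),
       x₀.2 / 2 ^ n + ∑ k ∈ Finset.range n, (sierpVertex (x k)).2 / 2 ^ (k + 1)) := by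
  induction n generalizing x₀ with
  | zero => simp [sierpApprox]
  | succ n ih =>
    have step : sierpApprox x (n + 1) x₀ = sierpApprox x n (sierpMap (x n) x₀) := by
      unfold sierpApprox
      rw [List.range_succ, List.foldr_append]
      rfl
    rw [step, ih (sierpMap (x n) x₀), Finset.sum_range_succ, Finset.sum_range_succ]
    apply Prod.ext <;> simp [sierpMap] <;> ring

/-- The projection is given by the geometric series. -/
lemma pi_formula (π : (ℕ → Fin 3) → ℝ × ℝ)
    (hπ : ∀ (x : ℕ → Fin 3) (x₀ : ℝ × ℝ),
      Filter.Tendsto (fun n => sierpApprox x n x₀) Filter.atTop (nhds (π x)))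
    (x : ℕ → Fin 3) :
    π x = (sierpW (fun i => (sierpVertex i).1) x, sierpW (fun i => (sierpVertex i).2) x) := by
  have s1 : Summable (fun k : ℕ => (sierpVertex (x k)).1 / 2 ^ (k + 1)) :=
    summable_sierp (fun i => (sierpVertex_mem i).1.1) (fun i => (sierpVertex_mem i).1.2) x
  have s2 : Summable (fun k : ℕ => (sierpVertex (x k)).2 / 2 ^ (k + 1)) :=
    summable_sierp (fun i => (sierpVertex_mem i).2.1) (fun i => (sierpVertex_mem i).2.2) x
  refine tendsto_nhds_unique (hπ x (0, 0)) ?_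
  have hformula : (fun n => sierpApprox x n ((0:ℝ), (0:ℝ))) =
      fun n => (∑ k ∈ Finset.range n, (sierpVertex (x k)).1 / 2 ^ (k + 1),
                ∑ k ∈ Finset.range n, (sierpVertex (x k)).2 / 2 ^ (k + 1)) := by
    funext n; rw [sierpApprox_formula]; simp
  rw [hformula]
  exact (s1.hasSum.tendsto_sum_nat).prodMk_nhds (s2.hasSum.tendsto_sum_nat)

lemma coord1 (i : Fin 3) :
    (sierpVertex i).1 = (1/2) * sierpInd 0 i + sierpInd 2 i := by
  fin_cases i <;> simp [sierpVertex, sierpInd]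

lemma coord2 (i : Fin 3) :
    (sierpVertex i).2 = (Real.sqrt 3 / 2) * sierpInd 0 i := by
  fin_cases i <;> simp [sierpVertex, sierpInd]

lemma ind_sum (j : Fin 3) : sierpInd 0 j + sierpInd 1 j + sierpInd 2 j = 1 := by
  fin_cases j <;> simp [sierpInd]

lemma summable_ind (i : Fin 3) (x : ℕ → Fin 3) :
    Summable (fun k : ℕ => sierpInd i (x k) / 2 ^ (k + 1)) :=
  summable_sierp (fun j => sierpInd_nonneg i j) (fun j => sierpInd_le_one i j) x

/-- From `π x = π y` we get equality of all three indicator weights. -/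
lemma weights_eq (x y : ℕ → Fin 3)
    (h1 : sierpW (fun i => (sierpVertex i).1) x = sierpW (fun i => (sierpVertex i).1) y)
    (h2 : sierpW (fun i => (sierpVertex i).2) x = sierpW (fun i => (sierpVertex i).2) y)
    (i : Fin 3) : sierpW (sierpInd i) x = sierpW (sierpInd i) y := by
  have hsqrt : Real.sqrt 3 ≠ 0 := by positivity
  have key2 : ∀ z : ℕ → Fin 3, sierpW (fun i => (sierpVertex i).2) z =
      (Real.sqrt 3 / 2) * sierpW (sierpInd 0) z := by
    intro z
    unfold sierpW
    rw [← tsum_mul_left]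
    apply tsum_congr
    intro k
    show (sierpVertex (z k)).2 / 2 ^ (k + 1) = Real.sqrt 3 / 2 * (sierpInd 0 (z k) / 2 ^ (k + 1))
    rw [coord2]
    ring
  have key1 : ∀ z : ℕ → Fin 3, sierpW (fun i => (sierpVertex i).1) z =
      (1/2) * sierpW (sierpInd 0) z + sierpW (sierpInd 2) z := by
    intro z
    unfold sierpW
    rw [← tsum_mul_left]
    rw [← Summable.tsum_add ((summable_ind 0 z).mul_left _) (summable_ind 2 z)]
    apply tsum_congr
    intro k
    show (sierpVertex (z k)).1 / 2 ^ (k + 1)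
      = 1 / 2 * (sierpInd 0 (z k) / 2 ^ (k + 1)) + sierpInd 2 (z k) / 2 ^ (k + 1)
    rw [coord1]
    ring
  have keysum : ∀ z : ℕ → Fin 3,
      sierpW (sierpInd 0) z + sierpW (sierpInd 1) z + sierpW (sierpInd 2) z = 1 := by
    intro z
    unfold sierpW
    rw [← Summable.tsum_add (summable_ind 0 z) (summable_ind 1 z),
      ← Summable.tsum_add ((summable_ind 0 z).add (summable_ind 1 z)) (summable_ind 2 z)]
    have : ∀ k : ℕ, sierpInd 0 (z k) / 2 ^ (k + 1) + sierpInd 1 (z k) / 2 ^ (k + 1)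
        + sierpInd 2 (z k) / 2 ^ (k + 1) = (1/2:ℝ) ^ k * (1/2) := by
      intro k
      rw [← add_div, ← add_div, ind_sum, one_div_pow, pow_succ]
      ring
    rw [tsum_congr this, tsum_mul_right, tsum_geometric_two]
    norm_num
  have h0 : sierpW (sierpInd 0) x = sierpW (sierpInd 0) y := by
    rw [key2 x, key2 y] at h2
    have := mul_left_cancel₀ (a := Real.sqrt 3 / 2) (by positivity) h2
    exact this
  have h2' : sierpW (sierpInd 2) x = sierpW (sierpInd 2) y := by
    rw [key1 x, key1 y, h0] at h1
    linarith
  have h1' : sierpW (sierpInd 1) x = sierpW (sierpInd 1) y := by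
    have hx := keysum x
    have hy := keysum y
    linarith
  fin_cases i <;> assumption

/-- The key rigidity lemma: if the `i`-weights agree, the prefixes agree up to `m`,
`x m = i` and `y m ≠ i`, then `x` avoids `i` after `m` and `y` is constantly `i` after `m`. -/
lemma tail_forces (i : Fin 3) (x y : ℕ → Fin 3) (m : ℕ)
    (hpre : ∀ s, s < m → x s = y s)
    (hW : sierpW (sierpInd i) x = sierpW (sierpInd i) y)
    (hx : x m = i) (hy : y m ≠ i) :
    (∀ s, m < s → x s ≠ i) ∧ (∀ s, m < s → y s = i) := by
  set f : ℕ → ℝ := fun k => sierpInd i (x k) / 2 ^ (k + 1) with hf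
  set g : ℕ → ℝ := fun k => sierpInd i (y k) / 2 ^ (k + 1) with hg
  have sf : Summable f := summable_ind i x
  have sg : Summable g := summable_ind i y
  have splitf := Summable.sum_add_tsum_nat_add (f := f) (m + 1) sf
  have splitg := Summable.sum_add_tsum_nat_add (f := g) (m + 1) sg
  have hWf : sierpW (sierpInd i) x = ∑' k, f k := rfl
  have hWg : sierpW (sierpInd i) y = ∑' k, g k := rfl
  -- heads
  have headf : ∑ k ∈ Finset.range (m + 1), f k
      = (∑ k ∈ Finset.range m, f k) + 1 / 2 ^ (m + 1) := by
    rw [Finset.sum_range_succ]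
    congr 1
    simp [hf, hx, sierpInd]
  have headg : ∑ k ∈ Finset.range (m + 1), g k = ∑ k ∈ Finset.range m, g k := by
    rw [Finset.sum_range_succ]
    have : sierpInd i (y m) = 0 := by simp [sierpInd, hy]
    simp [hg, this]
  have headeq : ∑ k ∈ Finset.range m, f k = ∑ k ∈ Finset.range m, g k := by
    apply Finset.sum_congr rfl
    intro k hk
    simp only [hf, hg, hpre k (Finset.mem_range.mp hk)]
  -- tails
  set A : ℝ := ∑' s : ℕ, f (s + (m + 1)) with hA
  set B : ℝ := ∑' s : ℕ, g (s + (m + 1)) with hB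
  have main : 1 / 2 ^ (m + 1) + A = B := by
    have := hW
    rw [hWf, hWg, ← splitf, ← splitg, headf, headg, headeq] at this
    linarith
  have fnn : ∀ k, 0 ≤ f k := fun k => div_nonneg (sierpInd_nonneg _ _) (by positivity)
  have gnn : ∀ k, 0 ≤ g k := fun k => div_nonneg (sierpInd_nonneg _ _) (by positivity)
  have sfA : Summable (fun s : ℕ => f (s + (m + 1))) := (summable_nat_add_iff (m + 1)).mpr sf
  have sgB : Summable (fun s : ℕ => g (s + (m + 1))) := (summable_nat_add_iff (m + 1)).mpr sg
  have sT : Summable (fun s : ℕ => (1:ℝ) / 2 ^ (s + m + 2)) := by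
    apply Summable.of_nonneg_of_le (fun s => by positivity) (fun s => ?_) summable_geometric_two
    rw [one_div, one_div_pow, one_div]
    apply inv_anti₀ (by positivity)
    exact pow_le_pow_right₀ (by norm_num) (by omega)
  have hTval : ∑' s : ℕ, (1:ℝ) / 2 ^ (s + m + 2) = 1 / 2 ^ (m + 1) := tsum_tail m
  have hgle : ∀ s : ℕ, g (s + (m + 1)) ≤ 1 / 2 ^ (s + m + 2) := by
    intro s
    simp only [hg]
    rw [show s + (m + 1) + 1 = s + m + 2 by omega]
    apply div_le_div_of_nonneg_right (sierpInd_le_one _ _) (by positivity) |>.trans_eq rfl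
  have hBle : B ≤ 1 / 2 ^ (m + 1) := by
    rw [hB, ← hTval]
    exact Summable.tsum_le_tsum hgle sgB sT
  have hAnn : 0 ≤ A := tsum_nonneg (fun s => fnn _)
  have hA0 : A = 0 := by linarith
  have hBT : B = 1 / 2 ^ (m + 1) := by linarith
  constructor
  · -- x avoids i after m
    intro s hs hxs
    have ht : f (s - (m + 1) + (m + 1)) ≤ A :=
      Summable.le_tsum sfA _ (fun j _ => fnn _)
    rw [show s - (m + 1) + (m + 1) = s by omega] at ht
    have hpos : f s = 1 / 2 ^ (s + 1) := by simp [hf, hxs, sierpInd]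
    rw [hpos, hA0] at ht
    have : (0:ℝ) < 1 / 2 ^ (s + 1) := by positivity
    linarith
  · -- y is constantly i after m
    intro s hs
    set h : ℕ → ℝ := fun t => (1:ℝ) / 2 ^ (t + m + 2) - g (t + (m + 1)) with hh
    have hnn : ∀ t, 0 ≤ h t := fun t => sub_nonneg.mpr (hgle t)
    have hsum : Summable h := sT.sub sgB
    have htsum : ∑' t, h t = 0 := by
      rw [hh]
      rw [Summable.tsum_sub sT sgB, hTval, ← hB, hBT]
      ring
    have ht : h (s - (m + 1)) ≤ ∑' t, h t := Summable.le_tsum hsum _ (fun j _ => hnn _)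
    rw [htsum] at ht
    have ht0 : h (s - (m + 1)) = 0 := le_antisymm ht (hnn _)
    rw [hh] at ht0
    simp only at ht0
    rw [show s - (m + 1) + (m + 1) = s by omega,
      show s - (m + 1) + m + 2 = s + 1 by omega] at ht0
    by_contra hys
    have hz : sierpInd i (y s) = 0 := by simp [sierpInd, hys]
    simp only [hg, hz] at ht0
    have : (0:ℝ) < 1 / 2 ^ (s + 1) := by positivity
    rw [zero_div, sub_zero] at ht0
    linarith

/-- Backward direction at the level of weights. -/
lemma W_swap {c : Fin 3 → ℝ} (hc0 : ∀ i, 0 ≤ c i) (hc1 : ∀ i, c i ≤ 1)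
    (x y : ℕ → Fin 3) (m : ℕ) (k l : Fin 3)
    (hpre : ∀ s, s < m → x s = y s)
    (hxm : x m = l) (hxt : ∀ s, m < s → x s = k)
    (hym : y m = k) (hyt : ∀ s, m < s → y s = l) :
    sierpW c x = sierpW c y := by
  have key : ∀ (z : ℕ → Fin 3) (a b : Fin 3), z m = a → (∀ s, m < s → z s = b) →
      sierpW c z = (∑ s ∈ Finset.range m, c (z s) / 2 ^ (s + 1))
        + c a / 2 ^ (m + 1) + c b / 2 ^ (m + 1) := by
    intro z a b hza hzb
    have sz : Summable (fun s : ℕ => c (z s) / 2 ^ (s + 1)) := summable_sierp hc0 hc1 z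
    have split := Summable.sum_add_tsum_nat_add (f := fun s : ℕ => c (z s) / 2 ^ (s + 1))
      (m + 1) sz
    have htail : ∑' s : ℕ, c (z (s + (m + 1))) / 2 ^ (s + (m + 1) + 1) = c b / 2 ^ (m + 1) := by
      have hzz : ∀ s : ℕ, c (z (s + (m + 1))) / 2 ^ (s + (m + 1) + 1)
          = c b * ((1:ℝ) / 2 ^ (s + m + 2)) := by
        intro s
        rw [hzb (s + (m + 1)) (by omega), show s + (m + 1) + 1 = s + m + 2 by omega]
        ring
      rw [tsum_congr hzz, tsum_mul_left, tsum_tail m]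
      ring
    have hhead : ∑ s ∈ Finset.range (m + 1), c (z s) / 2 ^ (s + 1)
        = (∑ s ∈ Finset.range m, c (z s) / 2 ^ (s + 1)) + c a / 2 ^ (m + 1) := by
      rw [Finset.sum_range_succ, hza]
    unfold sierpW
    rw [← split, hhead, htail]
  rw [key x l k hxm hxt, key y k l hym hyt]
  have : ∑ s ∈ Finset.range m, c (x s) / 2 ^ (s + 1)
      = ∑ s ∈ Finset.range m, c (y s) / 2 ^ (s + 1) := by
    apply Finset.sum_congr rfl
    intro s hs
    rw [hpre s (Finset.mem_range.mp hs)]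
  rw [this]
  ring

theorem stmt_18 (π : (ℕ → Fin 3) → ℝ × ℝ)
    (hπ : ∀ (x : ℕ → Fin 3) (x₀ : ℝ × ℝ),
      Filter.Tendsto (fun n => sierpApprox x n x₀) Filter.atTop (nhds (π x)))
    (x y : ℕ → Fin 3) (hxy : x ≠ y) :
    π x = π y ↔ ∃ (m : ℕ) (k l : Fin 3), k ≠ l ∧
      (∀ s, s < m → x s = y s) ∧
      (x m = l ∧ ∀ s, m < s → x s = k) ∧
      (y m = k ∧ ∀ s, m < s → y s = l) := by
  constructor
  · intro h
    rw [pi_formula π hπ x, pi_formula π hπ y, Prod.ext_iff] at h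
    obtain ⟨h1, h2⟩ := h
    have hw := weights_eq x y h1 h2
    have hne : ∃ n, x n ≠ y n := Function.ne_iff.mp hxy
    set m := Nat.find hne with hm
    have hmspec : x m ≠ y m := Nat.find_spec hne
    have hpre : ∀ s, s < m → x s = y s := by
      intro s hs
      by_contra hc
      exact absurd hs (not_lt.mpr (Nat.find_le hc))
    refine ⟨m, y m, x m, fun hc => hmspec hc.symm, hpre, ?_, ?_⟩
    · have h1 := tail_forces (x m) x y m hpre (hw (x m)) rfl (fun hc => hmspec hc.symm)
      have h2 := tail_forces (y m) y x m (fun s hs => (hpre s hs).symm)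
        (hw (y m)).symm rfl hmspec
      exact ⟨rfl, fun s hs => (h2.2 s hs)⟩
    · have h1 := tail_forces (x m) x y m hpre (hw (x m)) rfl (fun hc => hmspec hc.symm)
      exact ⟨rfl, fun s hs => h1.2 s hs⟩
  · rintro ⟨m, k, l, hkl, hpre, ⟨hxm, hxt⟩, ⟨hym, hyt⟩⟩
    rw [pi_formula π hπ x, pi_formula π hπ y, Prod.ext_iff]
    constructor
    · exact W_swap (fun i => (sierpVertex_mem i).1.1) (fun i => (sierpVertex_mem i).1.2)
        x y m k l hpre hxm hxt hym hyt
    · exact W_swap (fun i => (sierpVertex_mem i).2.1) (fun i => (sierpVertex_mem i).2.2)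
        x y m k l hpre hxm hxt hym hyt
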